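/- arXiv:0804.2131 — 4 statements merged into one kernel-verified Lean document; each statement's English description precedes it below -/
import Mathlib

section
/- The action of S¹ on SU(3) given by z · A = diag(z^{p₁}, z^{p₂}, z^{p₃}) · A · diag(1, 1, z^{−p₁−p₂−p₃}), where p₁, p₂, p₃ are pairwise coprime positive integers, is a free group action. -/
/-- The circle action `z · A = diag(z^{p₁}, z^{p₂}, z^{p₃}) · A · diag(1, 1, z^{−p₁−p₂−p₃})`
on `SU(3)`, with `p₁, p₂, p₃` pairwise coprime positive integers, is free: the only
element fixing some `A ∈ SU(3)` is `z = 1`. -/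
theorem stmt_5 (p₁ p₂ p₃ : ℕ) (h₁ : 0 < p₁) (h₂ : 0 < p₂) (h₃ : 0 < p₃)
    (h₁₂ : Nat.Coprime p₁ p₂) (h₁₃ : Nat.Coprime p₁ p₃) (h₂₃ : Nat.Coprime p₂ p₃)
    (z : Circle) (A : Matrix (Fin 3) (Fin 3) ℂ)
    (hA : A ∈ Matrix.specialUnitaryGroup (Fin 3) ℂ)
    (hfix : Matrix.diagonal ![(z : ℂ) ^ p₁, (z : ℂ) ^ p₂, (z : ℂ) ^ p₃] * A *
        Matrix.diagonal ![1, 1, ((z : ℂ) ^ (p₁ + p₂ + p₃))⁻¹] = A) :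
    z = 1 := by
  have hdet : A.det = 1 := ((Matrix.mem_specialUnitaryGroup_iff).mp hA).2
  -- coprime pair of relations forces z = 1
  have key1 : ∀ a b : ℕ, Nat.Coprime a b → (z : ℂ) ^ a = 1 → (z : ℂ) ^ b = 1 → z = 1 := by
    intro a b hab ha hb
    have ha' : z ^ a = 1 := by ext; push_cast; exact ha
    have hb' : z ^ b = 1 := by ext; push_cast; exact hb
    have h1 : orderOf z ∣ a := orderOf_dvd_of_pow_eq_one ha'
    have h2 : orderOf z ∣ b := orderOf_dvd_of_pow_eq_one hb'
    have : orderOf z ∣ 1 := hab ▸ Nat.dvd_gcd h1 h2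
    exact orderOf_eq_one_iff.mp (Nat.eq_one_of_dvd_one this)
  -- row zeros
  have key : ∀ i : Fin 3, (![(z : ℂ) ^ p₁, (z : ℂ) ^ p₂, (z : ℂ) ^ p₃] i ≠ 1) →
      A i 0 = 0 ∧ A i 1 = 0 := by
    intro i hi
    have h0 := congrFun (congrFun hfix i) 0
    have h1 := congrFun (congrFun hfix i) 1
    rw [Matrix.mul_diagonal, Matrix.diagonal_mul] at h0 h1
    simp only [Matrix.cons_val_zero, Matrix.cons_val_one, Matrix.head_cons, mul_one] at h0 h1
    constructor
    · rcases mul_eq_zero.mp (show (![(z : ℂ) ^ p₁, (z : ℂ) ^ p₂, (z : ℂ) ^ p₃] i - 1) * A i 0 = 0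
        by linear_combination h0) with h | h
      · exact absurd (sub_eq_zero.mp h) hi
      · exact h
    · rcases mul_eq_zero.mp (show (![(z : ℂ) ^ p₁, (z : ℂ) ^ p₂, (z : ℂ) ^ p₃] i - 1) * A i 1 = 0
        by linear_combination h1) with h | h
      · exact absurd (sub_eq_zero.mp h) hi
      · exact h
  have det0 : ∀ m n : Fin 3, m ≠ n → A m 0 = 0 → A m 1 = 0 → A n 0 = 0 → A n 1 = 0 → False := by
    intro m n hmn hm0 hm1 hn0 hn1
    rw [Matrix.det_fin_three] at hdet
    fin_cases m <;> fin_cases n <;> simp_all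
  by_cases hz1 : (z : ℂ) ^ p₁ = 1 <;> by_cases hz2 : (z : ℂ) ^ p₂ = 1 <;>
    by_cases hz3 : (z : ℂ) ^ p₃ = 1
  · exact key1 p₁ p₂ h₁₂ hz1 hz2
  · exact key1 p₁ p₂ h₁₂ hz1 hz2
  · exact key1 p₁ p₃ h₁₃ hz1 hz3
  · obtain ⟨a0, a1⟩ := key 1 (by simpa using hz2)
    obtain ⟨b0, b1⟩ := key 2 (by simpa using hz3)
    exact absurd (det0 1 2 (by decide) a0 a1 b0 b1) (by simp)
  · exact key1 p₂ p₃ h₂₃ hz2 hz3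
  · obtain ⟨a0, a1⟩ := key 0 (by simpa using hz1)
    obtain ⟨b0, b1⟩ := key 2 (by simpa using hz3)
    exact absurd (det0 0 2 (by decide) a0 a1 b0 b1) (by simp)
  · obtain ⟨a0, a1⟩ := key 0 (by simpa using hz1)
    obtain ⟨b0, b1⟩ := key 1 (by simpa using hz2)
    exact absurd (det0 0 1 (by decide) a0 a1 b0 b1) (by simp)
  · obtain ⟨a0, a1⟩ := key 0 (by simpa using hz1)
    obtain ⟨b0, b1⟩ := key 1 (by simpa using hz2)
    exact absurd (det0 0 1 (by decide) a0 a1 b0 b1) (by simp)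
end

section
/- Every orbit of the T³-action on U(3) given by (z,u,v) · A = diag(z^{−p₂−p₃}, z^{−p₁−p₃}, z^{−p₁−p₂}) · A · diag(u, v, 1) intersects SU(3) ⊆ U(3), and the intersection of any such orbit with SU(3) is exactly one orbit of the T²-action on SU(3) given by (z,u) · A = diag(z^{p₁}, z^{p₂}, z^{p₃}) · A · diag(u, u^{−1}, z^{−p₁−p₂−p₃}). Consequently the orbit spaces U(3)/T³ and SU(3)/T² are in natural bijection. -/
variable (p₁ p₂ p₃ : ℕ)

/-- The `T²`-orbit relation on `SU(3)`:
`(z,u) · A = diag(z^{p₁},z^{p₂},z^{p₃}) A diag(u,u⁻¹,z^{−p₁−p₂−p₃})`. -/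
def orbT2 (A A' : Matrix (Fin 3) (Fin 3) ℂ) : Prop :=
  ∃ z u : Circle,
    A' = Matrix.diagonal ![(z : ℂ) ^ p₁, (z : ℂ) ^ p₂, (z : ℂ) ^ p₃] * A *
      Matrix.diagonal ![(u : ℂ), (u : ℂ)⁻¹, ((z : ℂ) ^ (p₁ + p₂ + p₃))⁻¹]

/-- The `T³`-orbit relation on `U(3)`:
`(z,u,v) · A = diag(z^{−p₂−p₃},z^{−p₁−p₃},z^{−p₁−p₂}) A diag(u,v,1)`. -/
def orbT3 (A A' : Matrix (Fin 3) (Fin 3) ℂ) : Prop :=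
  ∃ z u v : Circle,
    A' = Matrix.diagonal ![((z : ℂ) ^ (p₂ + p₃))⁻¹, ((z : ℂ) ^ (p₁ + p₃))⁻¹,
        ((z : ℂ) ^ (p₁ + p₂))⁻¹] * A * Matrix.diagonal ![(u : ℂ), (v : ℂ), 1]

private lemma circle_coe_pow' (z : Circle) (n : ℕ) : ((z ^ n : Circle) : ℂ) = (z : ℂ) ^ n := by
  induction n with
  | zero => simp
  | succ n ih => rw [pow_succ, pow_succ, Circle.coe_mul, ih]

private lemma diag_swap (A : Matrix (Fin 3) (Fin 3) ℂ) (d e d' e' : Fin 3 → ℂ)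
    (h : ∀ i j, d i * e j = d' i * e' j) :
    Matrix.diagonal d * A * Matrix.diagonal e
      = Matrix.diagonal d' * A * Matrix.diagonal e' := by
  ext i j
  simp only [Matrix.mul_diagonal, Matrix.diagonal_mul]
  calc d i * A i j * e j = (d i * e j) * A i j := by ring
    _ = (d' i * e' j) * A i j := by rw [h]
    _ = d' i * A i j * e' j := by ring

/-- Every `T³`-orbit in `U(3)` meets `SU(3)`, and on `SU(3)` the `T³`-orbit relation
coincides with the `T²`-orbit relation; consequently the inclusion `SU(3) ↪ U(3)`
induces a bijection between `T²`-orbits of `SU(3)` and `T³`-orbits of `U(3)`. -/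
theorem stmt_7 (h₁ : 0 < p₁) (h₂ : 0 < p₂) (h₃ : 0 < p₃)
    (h₁₂ : Nat.Coprime p₁ p₂) (h₁₃ : Nat.Coprime p₁ p₃) (h₂₃ : Nat.Coprime p₂ p₃) :
    (∀ A ∈ Matrix.unitaryGroup (Fin 3) ℂ,
      ∃ A' ∈ Matrix.specialUnitaryGroup (Fin 3) ℂ, orbT3 p₁ p₂ p₃ A A') ∧
    (∀ A ∈ Matrix.specialUnitaryGroup (Fin 3) ℂ,
      ∀ A' ∈ Matrix.specialUnitaryGroup (Fin 3) ℂ,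
        (orbT3 p₁ p₂ p₃ A A' ↔ orbT2 p₁ p₂ p₃ A A')) := by
  constructor
  · -- every T³-orbit meets SU(3)
    intro A hA
    have hdet : A.det ∈ unitary ℂ := Matrix.det_of_mem_unitary hA
    have h2 : (starRingEnd ℂ) A.det * A.det = 1 := Unitary.star_mul_self_of_mem hdet
    have hnorm : ‖A.det‖ = 1 := by
      have h3 : ‖(starRingEnd ℂ) A.det‖ * ‖A.det‖ = 1 := by rw [← norm_mul, h2, norm_one]
      rw [RCLike.norm_conj] at h3
      nlinarith [norm_nonneg A.det]
    have hne : A.det ≠ 0 := by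
      intro h; rw [h] at hnorm; simp at hnorm
    have hwn : ‖(A.det)⁻¹‖ = 1 := by rw [norm_inv, hnorm]; norm_num
    have hwmem : (A.det)⁻¹ ∈ Metric.sphere (0 : ℂ) 1 := by
      rw [mem_sphere_zero_iff_norm]; exact hwn
    set w : Circle := ⟨(A.det)⁻¹, hwmem⟩ with hw
    have hDunit : Matrix.diagonal ![(w : ℂ), 1, 1] ∈ Matrix.unitaryGroup (Fin 3) ℂ := by
      rw [Matrix.mem_unitaryGroup_iff', Matrix.star_eq_conjTranspose,
        Matrix.diagonal_conjTranspose, Matrix.diagonal_mul_diagonal]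
      ext i j
      rcases eq_or_ne i j with rfl | hij
      · fin_cases i <;>
          simp [Complex.conj_mul', Circle.norm_coe, hwn]
      · simp [Matrix.diagonal_apply_ne _ hij, Matrix.one_apply_ne hij]
    have hone : (Matrix.diagonal ![(1 : ℂ), 1, 1]) = 1 := by
      have hv : (![(1:ℂ),1,1]) = fun _ => (1 : ℂ) := by funext i; fin_cases i <;> rfl
      rw [hv, Matrix.diagonal_one]
    refine ⟨A * Matrix.diagonal ![(w : ℂ), 1, 1], ?_, 1, w, 1, ?_⟩
    · rw [Matrix.mem_specialUnitaryGroup_iff]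
      refine ⟨mul_mem hA hDunit, ?_⟩
      rw [Matrix.det_mul, Matrix.det_diagonal, Fin.prod_univ_three]
      simp only [Matrix.cons_val_zero, Matrix.cons_val_one, Matrix.head_cons,
        Matrix.cons_val_two, Matrix.tail_cons, mul_one]
      exact mul_inv_cancel₀ hne
    · simp only [Circle.coe_one, one_pow, inv_one]
      rw [hone, one_mul]
  · -- on SU(3) the relations coincide
    intro A hA A' hA'
    rw [Matrix.mem_specialUnitaryGroup_iff] at hA hA'
    obtain ⟨hAu, hAd⟩ := hA
    obtain ⟨hA'u, hA'd⟩ := hA'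
    constructor
    · rintro ⟨z, u, v, heq⟩
      have hz : (z : ℂ) ≠ 0 := z.coe_ne_zero
      have hu : (u : ℂ) ≠ 0 := u.coe_ne_zero
      -- determinant relation : u v = z^{2(p₁+p₂+p₃)}
      have hdet : (u : ℂ) * v = (z : ℂ) ^ (2 * (p₁ + p₂ + p₃)) := by
        have h := congrArg Matrix.det heq
        simp only [Matrix.det_mul, Matrix.det_diagonal, Fin.prod_univ_three, hAd, hA'd,
          Matrix.cons_val_zero, Matrix.cons_val_one, Matrix.head_cons, Matrix.cons_val_two,
          Matrix.tail_cons, mul_one, one_mul] at h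
        field_simp at h
        rw [← h, ← pow_add, ← pow_add]
        ring_nf
      refine ⟨z, (z ^ (p₁ + p₂ + p₃))⁻¹ * u, ?_⟩
      rw [heq]
      apply diag_swap
      intro i j
      fin_cases i <;> fin_cases j <;>
        · simp only [Matrix.cons_val_zero, Matrix.cons_val_one, Matrix.head_cons,
            Matrix.cons_val_two, Matrix.tail_cons, Circle.coe_mul, Circle.coe_inv,
            circle_coe_pow', Fin.reduceFinMk, Matrix.cons_val]
          field_simp
          try ring
          try linear_combination hdet
    · rintro ⟨z, u, heq⟩
      have hz : (z : ℂ) ≠ 0 := z.coe_ne_zero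
      have hu : (u : ℂ) ≠ 0 := u.coe_ne_zero
      refine ⟨z, z ^ (p₁ + p₂ + p₃) * u, z ^ (p₁ + p₂ + p₃) * u⁻¹, ?_⟩
      rw [heq]
      symm
      apply diag_swap
      intro i j
      fin_cases i <;> fin_cases j <;>
        · simp only [Matrix.cons_val_zero, Matrix.cons_val_one, Matrix.head_cons,
            Matrix.cons_val_two, Matrix.tail_cons, Circle.coe_mul, Circle.coe_inv,
            circle_coe_pow', Fin.reduceFinMk, Matrix.cons_val]
          field_simp
          try ring
          try linear_combination hdet
end

section
/- Let p₁, p₂, p₃ be pairwise coprime positive integers. Define qᵢ = (p_{i+1} + p_{i+2})/2 if all pᵢ are odd, and qᵢ = p_{i+1} + p_{i+2} otherwise (indices mod 3). Then if all pᵢ are odd, each p_{i+1} + p_{i+2} is even, so the qᵢ are positive integers in both cases, and gcd(q₁, q₂, q₃) = 1. -/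
private lemma odd_of_coprime_even (x y : ℤ) (h : IsCoprime x y) (hx : Even x) : Odd y := by
  rcases Int.even_or_odd y with he | ho
  · exfalso
    obtain ⟨u, v, huv⟩ := h
    have h2 : (2 : ℤ) ∣ 1 := by
      rw [← huv]
      exact dvd_add (Dvd.dvd.mul_left hx.two_dvd u) (Dvd.dvd.mul_left he.two_dvd v)
    norm_num at h2
  · exact ho

private lemma gcd_three_sums (a b c : ℤ) (hbc : IsCoprime b c) (ha : Even a) (hb : Odd b)
    (g : ℕ) (hg1 : (g : ℤ) ∣ b + c) (hg2 : (g : ℤ) ∣ c + a) (hg3 : (g : ℤ) ∣ a + b) :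
    g = 1 := by
  have h2b : (g : ℤ) ∣ 2 * b := by
    have h : (g : ℤ) ∣ (b + c) + (a + b) - (c + a) := dvd_sub (dvd_add hg1 hg3) hg2
    convert h using 1; ring
  have h2c : (g : ℤ) ∣ 2 * c := by
    have h : (g : ℤ) ∣ (b + c) + (c + a) - (a + b) := dvd_sub (dvd_add hg1 hg2) hg3
    convert h using 1; ring
  obtain ⟨u, v, huv⟩ := hbc
  have hg2' : (g : ℤ) ∣ 2 := by
    have h : (g : ℤ) ∣ u * (2 * b) + v * (2 * c) :=
      dvd_add (Dvd.dvd.mul_left h2b u) (Dvd.dvd.mul_left h2c v)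
    have heq : u * (2 * b) + v * (2 * c) = 2 := by linear_combination 2 * huv
    rwa [heq] at h
  have hgn : g ∣ 2 := by exact_mod_cast hg2'
  have hodd : ¬ (2 : ℤ) ∣ a + b := by
    obtain ⟨m, hm⟩ := ha
    obtain ⟨n, hn⟩ := hb
    omega
  rcases (Nat.dvd_prime Nat.prime_two).mp hgn with h | h
  · exact h
  · subst h
    exact absurd (by exact_mod_cast hg3) hodd

/-- For pairwise coprime positive integers `p₁, p₂, p₃`, the weights
`qᵢ = (p_{i+1}+p_{i+2})/2` (if all `pᵢ` are odd) or `qᵢ = p_{i+1}+p_{i+2}` (otherwise)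
are well-defined positive integers (each `p_{i+1}+p_{i+2}` being even in the odd case),
and `gcd(q₁, q₂, q₃) = 1`. -/
theorem stmt_8 (p₁ p₂ p₃ : ℤ) (h₁ : 0 < p₁) (h₂ : 0 < p₂) (h₃ : 0 < p₃)
    (h₁₂ : IsCoprime p₁ p₂) (h₁₃ : IsCoprime p₁ p₃) (h₂₃ : IsCoprime p₂ p₃)
    (q₁ q₂ q₃ : ℤ)
    (hq₁ : q₁ = if Odd p₁ ∧ Odd p₂ ∧ Odd p₃ then (p₂ + p₃) / 2 else p₂ + p₃)
    (hq₂ : q₂ = if Odd p₁ ∧ Odd p₂ ∧ Odd p₃ then (p₃ + p₁) / 2 else p₃ + p₁)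
    (hq₃ : q₃ = if Odd p₁ ∧ Odd p₂ ∧ Odd p₃ then (p₁ + p₂) / 2 else p₁ + p₂) :
    ((Odd p₁ ∧ Odd p₂ ∧ Odd p₃) → (2 ∣ p₂ + p₃ ∧ 2 ∣ p₃ + p₁ ∧ 2 ∣ p₁ + p₂)) ∧
    0 < q₁ ∧ 0 < q₂ ∧ 0 < q₃ ∧ Int.gcd (Int.gcd q₁ q₂) q₃ = 1 := by
  set g : ℕ := Int.gcd (Int.gcd q₁ q₂) q₃ with hg
  have hd3 : (g : ℤ) ∣ q₃ := Int.gcd_dvd_right _ _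
  have hd1 : (g : ℤ) ∣ q₁ := dvd_trans (Int.gcd_dvd_left _ _) (Int.gcd_dvd_left _ _)
  have hd2 : (g : ℤ) ∣ q₂ := dvd_trans (Int.gcd_dvd_left _ _) (Int.gcd_dvd_right _ _)
  by_cases hodd : Odd p₁ ∧ Odd p₂ ∧ Odd p₃
  · obtain ⟨⟨a, ha⟩, ⟨b, hb⟩, ⟨c, hc⟩⟩ := hodd
    have hodd' : Odd p₁ ∧ Odd p₂ ∧ Odd p₃ := ⟨⟨a, ha⟩, ⟨b, hb⟩, ⟨c, hc⟩⟩
    rw [if_pos hodd'] at hq₁ hq₂ hq₃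
    have e1 : 2 ∣ p₂ + p₃ := ⟨b + c + 1, by omega⟩
    have e2 : 2 ∣ p₃ + p₁ := ⟨c + a + 1, by omega⟩
    have e3 : 2 ∣ p₁ + p₂ := ⟨a + b + 1, by omega⟩
    have k1 : 2 * q₁ = p₂ + p₃ := by rw [hq₁]; exact Int.mul_ediv_cancel' e1
    have k2 : 2 * q₂ = p₃ + p₁ := by rw [hq₂]; exact Int.mul_ediv_cancel' e2
    have k3 : 2 * q₃ = p₁ + p₂ := by rw [hq₃]; exact Int.mul_ediv_cancel' e3
    refine ⟨fun _ => ⟨e1, e2, e3⟩, by omega, by omega, by omega, ?_⟩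
    have hp1 : (g : ℤ) ∣ p₁ := by
      have h : (g : ℤ) ∣ q₂ + q₃ - q₁ := dvd_sub (dvd_add hd2 hd3) hd1
      have : q₂ + q₃ - q₁ = p₁ := by omega
      rwa [this] at h
    have hp2 : (g : ℤ) ∣ p₂ := by
      have h : (g : ℤ) ∣ q₁ + q₃ - q₂ := dvd_sub (dvd_add hd1 hd3) hd2
      have : q₁ + q₃ - q₂ = p₂ := by omega
      rwa [this] at h
    obtain ⟨u, v, huv⟩ := h₁₂
    have : (g : ℤ) ∣ 1 := by
      rw [← huv]
      exact dvd_add (Dvd.dvd.mul_left hp1 u) (Dvd.dvd.mul_left hp2 v)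
    exact Nat.dvd_one.mp (by exact_mod_cast this)
  · rw [if_neg hodd] at hq₁ hq₂ hq₃
    subst hq₁ hq₂ hq₃
    refine ⟨fun h => absurd h hodd, by omega, by omega, by omega, ?_⟩
    have := Int.even_or_odd p₁
    have := Int.even_or_odd p₂
    have := Int.even_or_odd p₃
    rcases Int.even_or_odd p₁ with he₁ | ho₁
    · exact gcd_three_sums p₁ p₂ p₃ h₂₃ he₁ (odd_of_coprime_even _ _ h₁₂ he₁) g hd1 hd2 hd3
    rcases Int.even_or_odd p₂ with he₂ | ho₂
    · exact gcd_three_sums p₂ p₃ p₁ (h₁₃.symm) he₂ (odd_of_coprime_even _ _ h₂₃ he₂) g hd2 hd3 hd1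
    rcases Int.even_or_odd p₃ with he₃ | ho₃
    · exact gcd_three_sums p₃ p₁ p₂ h₁₂ he₃ ho₁ g hd3 hd1 hd2
    · exact absurd ⟨ho₁, ho₂, ho₃⟩ hodd
end

section
/- If A, B, C : [t₀, ∞) → ℝ is a solution of A' = (2A²−B²−C²)/(BC), B' = (B²−C²−2A²)/(CA), C' = (C²−2A²−B²)/(AB) (with A,B,C ≠ 0 on (t₀,∞)) satisfying the boundary conditions B(t₀) = C(t₀) ≠ 0 and the solution extends continuously with B'(t₀) = C'(t₀) = 0 and A(t₀) = 0, then the difference function D = B² − C² vanishes at t₀ together with its derivative; and if additionally B, C, A have fixed sign on (t₀, ∞), then D ≡ 0 on [t₀, ∞), i.e., B = C everywhere (uniqueness of the B = C solution under the regularity boundary conditions). -/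
open Set Real

/-- Uniqueness of the `B = C` solution under the regularity boundary conditions:
if `A, B, C` solve the G₂ ODE system on `(t₀, ∞)`, are continuous on `[t₀, ∞)` with
`A(t₀) = 0`, `B(t₀) = C(t₀) ≠ 0`, `B'(t₀) = C'(t₀) = 0` (one-sided derivatives), and
`A`, `B`, `C` each have fixed sign on `(t₀, ∞)`, then `B = C` on all of `[t₀, ∞)`. -/
theorem stmt_19 (t₀ : ℝ) (A B C : ℝ → ℝ)
    (hAcont : ContinuousOn A (Set.Ici t₀)) (hBcont : ContinuousOn B (Set.Ici t₀))
    (hCcont : ContinuousOn C (Set.Ici t₀))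
    (hA : ∀ t ∈ Set.Ioi t₀,
      HasDerivAt A ((2 * A t ^ 2 - B t ^ 2 - C t ^ 2) / (B t * C t)) t)
    (hB : ∀ t ∈ Set.Ioi t₀,
      HasDerivAt B ((B t ^ 2 - C t ^ 2 - 2 * A t ^ 2) / (C t * A t)) t)
    (hC : ∀ t ∈ Set.Ioi t₀,
      HasDerivAt C ((C t ^ 2 - 2 * A t ^ 2 - B t ^ 2) / (A t * B t)) t)
    (hA₀ : A t₀ = 0) (hBC₀ : B t₀ = C t₀) (hB₀ : B t₀ ≠ 0)
    (hB'₀ : HasDerivWithinAt B 0 (Set.Ici t₀) t₀)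
    (hC'₀ : HasDerivWithinAt C 0 (Set.Ici t₀) t₀)
    (hAsign : (∀ t ∈ Set.Ioi t₀, 0 < A t) ∨ (∀ t ∈ Set.Ioi t₀, A t < 0))
    (hBsign : (∀ t ∈ Set.Ioi t₀, 0 < B t) ∨ (∀ t ∈ Set.Ioi t₀, B t < 0))
    (hCsign : (∀ t ∈ Set.Ioi t₀, 0 < C t) ∨ (∀ t ∈ Set.Ioi t₀, C t < 0)) :
    ∀ t ∈ Set.Ici t₀, B t = C t := by
  have hBne : ∀ t ∈ Set.Ioi t₀, B t ≠ 0 := by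
    rcases hBsign with h | h <;> intro t ht
    · exact (h t ht).ne'
    · exact (h t ht).ne
  have hCne : ∀ t ∈ Set.Ioi t₀, C t ≠ 0 := by
    rcases hCsign with h | h <;> intro t ht
    · exact (h t ht).ne'
    · exact (h t ht).ne
  have hAne : ∀ t ∈ Set.Ioi t₀, A t ≠ 0 := by
    rcases hAsign with h | h <;> intro t ht
    · exact (h t ht).ne'
    · exact (h t ht).ne
  set g : ℝ → ℝ := fun t => ((B t + C t) ^ 2 - 2 * A t ^ 2) / (A t * (B t * C t)) with hg
  -- the difference D = B - C satisfies D' = g * D on (t₀, ∞)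
  have hD : ∀ t ∈ Set.Ioi t₀, HasDerivAt (fun s => B s - C s) (g t * (B t - C t)) t := by
    intro t ht
    have h := (hB t ht).fun_sub (hC t ht)
    refine h.congr_deriv (Eq.symm ?_)
    have hb := hBne t ht
    have hc := hCne t ht
    have ha := hAne t ht
    show ((B t + C t) ^ 2 - 2 * A t ^ 2) / (A t * (B t * C t)) * (B t - C t) = _
    field_simp
    ring
  have hC₀ne : C t₀ ≠ 0 := hBC₀ ▸ hB₀
  -- eventually near t₀ within Ici t₀ the relevant quantities have a fixed sign
  have hB0 : ContinuousWithinAt B (Set.Ici t₀) t₀ := hBcont.continuousWithinAt self_mem_Ici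
  have hC0 : ContinuousWithinAt C (Set.Ici t₀) t₀ := hCcont.continuousWithinAt self_mem_Ici
  have hA0 : ContinuousWithinAt A (Set.Ici t₀) t₀ := hAcont.continuousWithinAt self_mem_Ici
  have hkey : ∀ᶠ t in nhdsWithin t₀ (Set.Ici t₀),
      0 < B t * C t ∧ 0 < (B t + C t) ^ 2 - 2 * A t ^ 2 ∧
        (2 * A t ^ 2 - B t ^ 2 - C t ^ 2) / (B t * C t) < -1 := by
    have h1 : ContinuousWithinAt (fun t => B t * C t) (Set.Ici t₀) t₀ := hB0.mul hC0
    have h2 : ContinuousWithinAt (fun t => (B t + C t) ^ 2 - 2 * A t ^ 2) (Set.Ici t₀) t₀ :=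
      ((hB0.add hC0).pow 2).sub ((continuousWithinAt_const.mul (hA0.pow 2)))
    have h3 : ContinuousWithinAt
        (fun t => (2 * A t ^ 2 - B t ^ 2 - C t ^ 2) / (B t * C t)) (Set.Ici t₀) t₀ := by
      apply ContinuousWithinAt.div
      · exact ((continuousWithinAt_const.mul (hA0.pow 2)).sub (hB0.pow 2)).sub (hC0.pow 2)
      · exact h1
      · exact mul_ne_zero hB₀ hC₀ne
    have e1 : ∀ᶠ t in nhdsWithin t₀ (Set.Ici t₀), 0 < B t * C t := by
      apply h1.eventually (eventually_gt_nhds ?_)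
      show (0:ℝ) < B t₀ * C t₀
      rw [hBC₀]
      exact mul_self_pos.mpr hC₀ne
    have e2 : ∀ᶠ t in nhdsWithin t₀ (Set.Ici t₀), 0 < (B t + C t) ^ 2 - 2 * A t ^ 2 := by
      apply h2.eventually (eventually_gt_nhds ?_)
      show (0:ℝ) < (B t₀ + C t₀) ^ 2 - 2 * A t₀ ^ 2
      rw [hBC₀, hA₀]
      have h5 := mul_self_pos.mpr hC₀ne
      nlinarith
    have e3 : ∀ᶠ t in nhdsWithin t₀ (Set.Ici t₀),
        (2 * A t ^ 2 - B t ^ 2 - C t ^ 2) / (B t * C t) < -1 := by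
      apply h3.eventually (eventually_lt_nhds ?_)
      show (2 * A t₀ ^ 2 - B t₀ ^ 2 - C t₀ ^ 2) / (B t₀ * C t₀) < -1
      have : (2 * A t₀ ^ 2 - B t₀ ^ 2 - C t₀ ^ 2) / (B t₀ * C t₀) = -2 := by
        rw [hA₀, hBC₀]
        field_simp
        ring
      rw [this]; norm_num
    filter_upwards [e1, e2, e3] with t h1 h2 h3 using ⟨h1, h2, h3⟩
  obtain ⟨u, hu, hsub⟩ := mem_nhdsGE_iff_exists_Ico_subset.mp hkey
  rw [Set.mem_Ioi] at hu
  set t₁ : ℝ := (t₀ + u) / 2 with ht₁def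
  have ht₁ : t₀ < t₁ := by simp only [ht₁def]; linarith
  have ht₁u : t₁ < u := by simp only [ht₁def]; linarith
  have hIccsub : Set.Icc t₀ t₁ ⊆ Set.Ico t₀ u := Set.Icc_subset_Ico_right ht₁u
  -- A must be negative on (t₀, ∞)
  have hAneg : ∀ t ∈ Set.Ioi t₀, A t < 0 := by
    rcases hAsign with h | h
    · exfalso
      obtain ⟨ξ, hξ, hslope⟩ := exists_hasDerivAt_eq_slope A
        (fun t => (2 * A t ^ 2 - B t ^ 2 - C t ^ 2) / (B t * C t)) ht₁
        (hAcont.mono (Set.Icc_subset_Ici_self))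
        (fun x hx => hA x (Set.mem_Ioi.mpr hx.1))
      have hξmem : ξ ∈ Set.Ico t₀ u := ⟨hξ.1.le, hξ.2.trans ht₁u⟩
      have h3 := (hsub hξmem).2.2
      rw [hslope, hA₀, sub_zero] at h3
      have hpos := h t₁ (Set.mem_Ioi.mpr ht₁)
      have htt : 0 < t₁ - t₀ := by linarith
      rw [div_lt_iff₀ htt] at h3
      nlinarith
    · exact h
  -- g is negative on (t₀, t₁]
  have hgneg : ∀ x ∈ Set.Ioc t₀ t₁, g x < 0 := by
    intro x hx
    have hxm : x ∈ Set.Ico t₀ u := ⟨hx.1.le, hx.2.trans_lt ht₁u⟩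
    obtain ⟨h1, h2, _⟩ := hsub hxm
    have hax := hAneg x hx.1
    have hden : A x * (B x * C x) < 0 := mul_neg_of_neg_of_pos hax h1
    exact div_neg_of_pos_of_neg h2 hden
  -- Step 1: B = C on [t₀, t₁] since (B - C)² is nonincreasing there
  have hE : AntitoneOn (fun t => (B t - C t) ^ 2) (Set.Icc t₀ t₁) := by
    apply antitoneOn_of_deriv_nonpos (convex_Icc _ _)
    · exact ((hBcont.mono Set.Icc_subset_Ici_self).sub
        (hCcont.mono Set.Icc_subset_Ici_self)).pow 2
    · intro x hx
      rw [interior_Icc] at hx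
      exact (((hD x hx.1).pow 2)).differentiableAt.differentiableWithinAt
    · intro x hx
      rw [interior_Icc] at hx
      have hd := (hD x hx.1).fun_pow 2
      rw [hd.deriv]
      have hgx := hgneg x ⟨hx.1, hx.2.le⟩
      push_cast
      nlinarith [sq_nonneg (B x - C x)]
  have hstep1 : ∀ t ∈ Set.Icc t₀ t₁, B t = C t := by
    intro t ht
    have h1 := hE (Set.left_mem_Icc.mpr ht₁.le) ht ht.1
    have h2 : (B t₀ - C t₀) ^ 2 = 0 := by rw [hBC₀]; ring
    have h3 : (B t - C t) ^ 2 ≤ 0 := by simpa [h2] using h1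
    have h4 : (B t - C t) ^ 2 = 0 := le_antisymm h3 (sq_nonneg _)
    have := sq_eq_zero_iff.mp h4
    linarith
  -- Step 2: Grönwall on [t₁, t] for t > t₁
  intro t ht
  rcases le_or_gt t t₁ with h | h
  · exact hstep1 t ⟨ht, h⟩
  · have hIoi : Set.Icc t₁ t ⊆ Set.Ioi t₀ := fun x hx => lt_of_lt_of_le ht₁ hx.1
    have hIci : Set.Icc t₁ t ⊆ Set.Ici t₀ := fun x hx => (ht₁.trans_le hx.1).le
    have hcont : ContinuousOn (fun s => B s - C s) (Set.Icc t₁ t) :=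
      (hBcont.mono hIci).sub (hCcont.mono hIci)
    have hgcont : ContinuousOn g (Set.Icc t₁ t) := by
      apply ContinuousOn.div
      · exact (((hBcont.mono hIci).add (hCcont.mono hIci)).pow 2).sub
          (continuousOn_const.mul ((hAcont.mono hIci).pow 2))
      · exact (hAcont.mono hIci).mul ((hBcont.mono hIci).mul (hCcont.mono hIci))
      · intro x hx
        exact mul_ne_zero (hAne x (hIoi hx)) (mul_ne_zero (hBne x (hIoi hx)) (hCne x (hIoi hx)))
    obtain ⟨K, hK⟩ := isCompact_Icc.exists_bound_of_continuousOn hgcont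
    have hzero : ‖B t₁ - C t₁‖ ≤ 0 := by
      rw [hstep1 t₁ ⟨ht₁.le, le_refl _⟩]
      simp
    have hderiv : ∀ x ∈ Set.Ico t₁ t,
        HasDerivWithinAt (fun s => B s - C s) (g x * (B x - C x)) (Set.Ici x) x :=
      fun x hx => (hD x (ht₁.trans_le hx.1)).hasDerivWithinAt
    have hbound : ∀ x ∈ Set.Ico t₁ t, ‖g x * (B x - C x)‖ ≤ K * ‖B x - C x‖ + 0 := by
      intro x hx
      rw [norm_mul, add_zero]
      exact mul_le_mul_of_nonneg_right (hK x ⟨hx.1, hx.2.le⟩) (norm_nonneg _)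
    have := norm_le_gronwallBound_of_norm_deriv_right_le hcont hderiv hzero hbound t
      ⟨h.le, le_refl _⟩
    rw [gronwallBound_ε0_δ0] at this
    have h0 : B t - C t = 0 := by
      have := norm_le_zero_iff.mp this
      exact this
    linarith
end
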